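/- For a ferromagnetic RBM (J ≥ 0 entrywise) with arbitrary external fields, when the marginal distribution on the observed variables is written as an MRF Pr[X=x] ∝ exp(f(x)), the coefficient of every degree-2 monomial x_i x_j in the multilinear expansion of f is nonnegative, and is strictly positive whenever i and j have a common latent neighbor (J_{ik}, J_{jk} > 0 for some k). -/
import Mathlib

noncomputable def pm (b : Bool) : ℝ := if b then 1 else -1

namespace Stmt14Aux

noncomputable def rr (a : ℝ) : ℝ := Real.log (Real.exp a + Real.exp (-a))

lemma rr_pair (p q : ℝ) :
    rr p + rr q = Real.log (2 * (Real.cosh (p + q) + Real.cosh (p - q))) := by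
  unfold rr
  rw [← Real.log_mul (by positivity) (by positivity)]
  congr 1
  have hp : Real.exp p + Real.exp (-p) = 2 * Real.cosh p := by rw [Real.cosh_eq]; ring
  have hq : Real.exp q + Real.exp (-q) = 2 * Real.cosh q := by rw [Real.cosh_eq]; ring
  rw [hp, hq, Real.cosh_add, Real.cosh_sub]; ring

lemma core_le (S a b : ℝ) (ha : 0 ≤ a) (hb : 0 ≤ b) :
    rr (S - 2*a) + rr (S - 2*b) ≤ rr S + rr (S - 2*a - 2*b) := by
  rw [rr_pair, rr_pair]
  have e1 : S - 2*a + (S - 2*b) = S + (S - 2*a - 2*b) := by ring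
  have e2 : S - 2*a - (S - 2*b) = 2*b - 2*a := by ring
  have e3 : S - (S - 2*a - 2*b) = 2*a + 2*b := by ring
  rw [e1, e2, e3]
  have hc : Real.cosh (2*b - 2*a) ≤ Real.cosh (2*a + 2*b) := by
    rw [Real.cosh_le_cosh, abs_of_nonneg (by linarith : (0:ℝ) ≤ 2*a + 2*b)]
    exact abs_le.2 ⟨by linarith, by linarith⟩
  have h1 : (0:ℝ) < 2 * (Real.cosh (S + (S - 2*a - 2*b)) + Real.cosh (2*b - 2*a)) := by
    have := Real.cosh_pos (x := S + (S - 2*a - 2*b))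
    have := Real.cosh_pos (x := 2*b - 2*a)
    linarith
  exact Real.log_le_log h1 (by linarith)

lemma core_lt (S a b : ℝ) (ha : 0 < a) (hb : 0 < b) :
    rr (S - 2*a) + rr (S - 2*b) < rr S + rr (S - 2*a - 2*b) := by
  rw [rr_pair, rr_pair]
  have e1 : S - 2*a + (S - 2*b) = S + (S - 2*a - 2*b) := by ring
  have e2 : S - 2*a - (S - 2*b) = 2*b - 2*a := by ring
  have e3 : S - (S - 2*a - 2*b) = 2*a + 2*b := by ring
  rw [e1, e2, e3]
  have hc : Real.cosh (2*b - 2*a) < Real.cosh (2*a + 2*b) := by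
    rw [Real.cosh_lt_cosh, abs_of_nonneg (by linarith : (0:ℝ) ≤ 2*a + 2*b)]
    exact abs_lt.2 ⟨by linarith, by linarith⟩
  have h1 : (0:ℝ) < 2 * (Real.cosh (S + (S - 2*a - 2*b)) + Real.cosh (2*b - 2*a)) := by
    have := Real.cosh_pos (x := S + (S - 2*a - 2*b))
    have := Real.cosh_pos (x := 2*b - 2*a)
    linarith
  exact Real.log_lt_log h1 (by linarith)

@[simp] lemma pm_true : pm true = 1 := rfl
@[simp] lemma pm_false : pm false = -1 := rfl
@[simp] lemma pm_not (b : Bool) : pm (!b) = -pm b := by cases b <;> simp [pm]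

def flipb {n : ℕ} (k : Fin n) (x : Fin n → Bool) : Fin n → Bool :=
  Function.update x k (!x k)

lemma flipb_bij {n : ℕ} (k : Fin n) : Function.Bijective (flipb (n := n) k) := by
  apply Function.Involutive.bijective
  intro x
  funext a
  rcases eq_or_ne a k with rfl | hne
  · simp [flipb]
  · simp [flipb, Function.update_of_ne hne]

lemma sum_flip {n : ℕ} (G : (Fin n → Bool) → ℝ) (k : Fin n) :
    ∑ x, G (flipb k x) = ∑ x, G x :=
  Fintype.sum_bijective (flipb k) (flipb_bij k) _ _ (fun _ => rfl)

lemma four {n : ℕ} (i j : Fin n) (G : (Fin n → Bool) → ℝ) :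
    ∑ x, (G x + G (flipb i x) + G (flipb j x) + G (flipb i (flipb j x)))
      = 4 * ∑ x, G x := by
  have h1 : ∑ x, G (flipb i x) = ∑ x, G x := sum_flip G i
  have h2 : ∑ x, G (flipb j x) = ∑ x, G x := sum_flip G j
  have h3 : ∑ x, G (flipb i (flipb j x)) = ∑ x, G (flipb i x) :=
    Fintype.sum_bijective (flipb j) (flipb_bij j)
      (fun x => G (flipb i (flipb j x))) (fun x => G (flipb i x)) (fun _ => rfl)
  rw [Finset.sum_add_distrib, Finset.sum_add_distrib, Finset.sum_add_distrib,
    h1, h2, h3, h1]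
  ring

lemma sum_update_pm {n : ℕ} (w : Fin n → ℝ) (x : Fin n → Bool) (k : Fin n) :
    ∑ i', w i' * pm (flipb k x i')
      = (∑ i', w i' * pm (x i')) - 2 * w k * pm (x k) := by
  have key : ∑ i', (w i' * pm (flipb k x i') - w i' * pm (x i'))
      = -(2 * w k * pm (x k)) := by
    rw [Finset.sum_eq_single k]
    · simp [flipb]; ring
    · intro b _ hb
      simp [flipb, Function.update_of_ne hb]
    · simp
  rw [Finset.sum_sub_distrib] at key
  linarith

section Brackets

variable {n : ℕ}

/-- The degree-2 "bracket" of one hidden unit's term. -/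
noncomputable def Gk (w : Fin n → ℝ) (b : ℝ) (i j : Fin n) (x : Fin n → Bool) : ℝ :=
  rr ((∑ i', w i' * pm (x i')) + b) * pm (x i) * pm (x j)

noncomputable def Lin (h : Fin n → ℝ) (i j : Fin n) (x : Fin n → Bool) : ℝ :=
  (∑ i', h i' * pm (x i')) * pm (x i) * pm (x j)

lemma bracket_nonneg (i j : Fin n) (hij : i ≠ j) (w : Fin n → ℝ) (b : ℝ) (hwi : 0 ≤ w i) (hwj : 0 ≤ w j)
    (x : Fin n → Bool) :
    0 ≤ Gk w b i j x + Gk w b i j (flipb i x) + Gk w b i j (flipb j x)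
      + Gk w b i j (flipb i (flipb j x)) := by
  have fs : ∀ y : Fin n → Bool, flipb i y i = !(y i) := fun y => by simp [flipb]
  have fs' : ∀ y : Fin n → Bool, flipb j y j = !(y j) := fun y => by simp [flipb]
  have fo : ∀ y : Fin n → Bool, flipb j y i = y i :=
    fun y => Function.update_of_ne hij _ _
  have fo' : ∀ y : Fin n → Bool, flipb i y j = y j :=
    fun y => Function.update_of_ne hij.symm _ _
  unfold Gk
  simp only [sum_update_pm, fs, fs', fo, fo', pm_not]
  set A := ∑ i', w i' * pm (x i') with hA
  have E : ∀ u v : ℝ, u = v → rr u = rr v := fun _ _ hh => congrArg rr hh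
  cases hxi : x i <;> cases hxj : x j <;>
    simp only [hxi, hxj, pm_true, pm_false]
  · linarith [core_le (A + 2*w i + 2*w j + b) (w i) (w j) hwi hwj,
      E (A + b) (A + 2*w i + 2*w j + b - 2*w i - 2*w j) (by ring),
      E (A - 2*w i * -1 + b) (A + 2*w i + 2*w j + b - 2*w j) (by ring),
      E (A - 2*w j * -1 + b) (A + 2*w i + 2*w j + b - 2*w i) (by ring),
      E (A - 2*w j * -1 - 2*w i * -1 + b) (A + 2*w i + 2*w j + b) (by ring)]
  · linarith [core_le (A + 2*w i + b) (w i) (w j) hwi hwj,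
      E (A + b) (A + 2*w i + b - 2*w i) (by ring),
      E (A - 2*w i * -1 + b) (A + 2*w i + b) (by ring),
      E (A - 2*w j * 1 + b) (A + 2*w i + b - 2*w i - 2*w j) (by ring),
      E (A - 2*w j * 1 - 2*w i * -1 + b) (A + 2*w i + b - 2*w j) (by ring)]
  · linarith [core_le (A + 2*w j + b) (w i) (w j) hwi hwj,
      E (A + b) (A + 2*w j + b - 2*w j) (by ring),
      E (A - 2*w i * 1 + b) (A + 2*w j + b - 2*w i - 2*w j) (by ring),
      E (A - 2*w j * -1 + b) (A + 2*w j + b) (by ring),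
      E (A - 2*w j * -1 - 2*w i * 1 + b) (A + 2*w j + b - 2*w i) (by ring)]
  · linarith [core_le (A + b) (w i) (w j) hwi hwj,
      E (A - 2*w i * 1 + b) (A + b - 2*w i) (by ring),
      E (A - 2*w j * 1 + b) (A + b - 2*w j) (by ring),
      E (A - 2*w j * 1 - 2*w i * 1 + b) (A + b - 2*w i - 2*w j) (by ring)]

lemma bracket_pos (i j : Fin n) (hij : i ≠ j) (w : Fin n → ℝ) (b : ℝ) (hwi : 0 < w i) (hwj : 0 < w j)
    (x : Fin n → Bool) :
    0 < Gk w b i j x + Gk w b i j (flipb i x) + Gk w b i j (flipb j x)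
      + Gk w b i j (flipb i (flipb j x)) := by
  have fs : ∀ y : Fin n → Bool, flipb i y i = !(y i) := fun y => by simp [flipb]
  have fs' : ∀ y : Fin n → Bool, flipb j y j = !(y j) := fun y => by simp [flipb]
  have fo : ∀ y : Fin n → Bool, flipb j y i = y i :=
    fun y => Function.update_of_ne hij _ _
  have fo' : ∀ y : Fin n → Bool, flipb i y j = y j :=
    fun y => Function.update_of_ne hij.symm _ _
  unfold Gk
  simp only [sum_update_pm, fs, fs', fo, fo', pm_not]
  set A := ∑ i', w i' * pm (x i') with hA
  have E : ∀ u v : ℝ, u = v → rr u = rr v := fun _ _ hh => congrArg rr hh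
  cases hxi : x i <;> cases hxj : x j <;>
    simp only [hxi, hxj, pm_true, pm_false]
  · linarith [core_lt (A + 2*w i + 2*w j + b) (w i) (w j) hwi hwj,
      E (A + b) (A + 2*w i + 2*w j + b - 2*w i - 2*w j) (by ring),
      E (A - 2*w i * -1 + b) (A + 2*w i + 2*w j + b - 2*w j) (by ring),
      E (A - 2*w j * -1 + b) (A + 2*w i + 2*w j + b - 2*w i) (by ring),
      E (A - 2*w j * -1 - 2*w i * -1 + b) (A + 2*w i + 2*w j + b) (by ring)]
  · linarith [core_lt (A + 2*w i + b) (w i) (w j) hwi hwj,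
      E (A + b) (A + 2*w i + b - 2*w i) (by ring),
      E (A - 2*w i * -1 + b) (A + 2*w i + b) (by ring),
      E (A - 2*w j * 1 + b) (A + 2*w i + b - 2*w i - 2*w j) (by ring),
      E (A - 2*w j * 1 - 2*w i * -1 + b) (A + 2*w i + b - 2*w j) (by ring)]
  · linarith [core_lt (A + 2*w j + b) (w i) (w j) hwi hwj,
      E (A + b) (A + 2*w j + b - 2*w j) (by ring),
      E (A - 2*w i * 1 + b) (A + 2*w j + b - 2*w i - 2*w j) (by ring),
      E (A - 2*w j * -1 + b) (A + 2*w j + b) (by ring),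
      E (A - 2*w j * -1 - 2*w i * 1 + b) (A + 2*w j + b - 2*w i) (by ring)]
  · linarith [core_lt (A + b) (w i) (w j) hwi hwj,
      E (A - 2*w i * 1 + b) (A + b - 2*w i) (by ring),
      E (A - 2*w j * 1 + b) (A + b - 2*w j) (by ring),
      E (A - 2*w j * 1 - 2*w i * 1 + b) (A + b - 2*w i - 2*w j) (by ring)]

lemma bracket_lin (i j : Fin n) (hij : i ≠ j) (h : Fin n → ℝ) (x : Fin n → Bool) :
    Lin h i j x + Lin h i j (flipb i x) + Lin h i j (flipb j x)
      + Lin h i j (flipb i (flipb j x)) = 0 := by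
  have fs : ∀ y : Fin n → Bool, flipb i y i = !(y i) := fun y => by simp [flipb]
  have fs' : ∀ y : Fin n → Bool, flipb j y j = !(y j) := fun y => by simp [flipb]
  have fo : ∀ y : Fin n → Bool, flipb j y i = y i :=
    fun y => Function.update_of_ne hij _ _
  have fo' : ∀ y : Fin n → Bool, flipb i y j = y j :=
    fun y => Function.update_of_ne hij.symm _ _
  unfold Lin
  simp only [sum_update_pm, fs, fs', fo, fo', pm_not]
  ring

lemma sum_Gk_nonneg (i j : Fin n) (hij : i ≠ j) (w : Fin n → ℝ) (b : ℝ) (hwi : 0 ≤ w i) (hwj : 0 ≤ w j) :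
    0 ≤ ∑ x, Gk w b i j x := by
  have h0 : 0 ≤ ∑ x, (Gk w b i j x + Gk w b i j (flipb i x) + Gk w b i j (flipb j x)
      + Gk w b i j (flipb i (flipb j x))) :=
    Finset.sum_nonneg fun x _ => bracket_nonneg i j hij w b hwi hwj x
  rw [four] at h0
  linarith

lemma sum_Gk_pos (i j : Fin n) (hij : i ≠ j) (w : Fin n → ℝ) (b : ℝ) (hwi : 0 < w i) (hwj : 0 < w j) :
    0 < ∑ x, Gk w b i j x := by
  have h0 : 0 < ∑ x, (Gk w b i j x + Gk w b i j (flipb i x) + Gk w b i j (flipb j x)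
      + Gk w b i j (flipb i (flipb j x))) :=
    Finset.sum_pos (fun x _ => bracket_pos i j hij w b hwi hwj x) Finset.univ_nonempty
  rw [four] at h0
  linarith

lemma sum_lin_zero (i j : Fin n) (hij : i ≠ j) (h : Fin n → ℝ) : ∑ x, Lin h i j x = 0 := by
  have h0 : ∑ x, (Lin h i j x + Lin h i j (flipb i x) + Lin h i j (flipb j x)
      + Lin h i j (flipb i (flipb j x))) = 0 :=
    Finset.sum_eq_zero fun x _ => bracket_lin i j hij h x
  rw [four] at h0
  linarith

end Brackets

end Stmt14Aux

open Stmt14Aux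
theorem stmt14 (n m : ℕ) (J : Matrix (Fin n) (Fin m) ℝ) (hJ : ∀ i j, 0 ≤ J i j)
    (h : Fin n → ℝ) (g : Fin m → ℝ) (i j : Fin n) (hij : i ≠ j) :
    let ρ : ℝ → ℝ := fun a => Real.log (Real.exp a + Real.exp (-a))
    let f : (Fin n → ℝ) → ℝ := fun x =>
      (∑ k, ρ ((∑ i', J i' k * x i') + g k)) + ∑ i', h i' * x i'
    let c : ℝ := ((2 : ℝ) ^ n)⁻¹ *
      ∑ x : Fin n → Bool, f (fun a => pm (x a)) * pm (x i) * pm (x j)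
    0 ≤ c ∧ ((∃ k, 0 < J i k ∧ 0 < J j k) → 0 < c) := by
  intro ρ f c
  have hsum : (∑ x : Fin n → Bool, f (fun a => pm (x a)) * pm (x i) * pm (x j))
      = ∑ k, ∑ x : Fin n → Bool, Gk (fun i' => J i' k) (g k) i j x := by
    have step : ∀ x : Fin n → Bool,
        f (fun a => pm (x a)) * pm (x i) * pm (x j)
          = (∑ k, Gk (fun i' => J i' k) (g k) i j x) + Lin h i j x := by
      intro x
      show ((∑ k, rr ((∑ i', J i' k * pm (x i')) + g k)) + ∑ i', h i' * pm (x i'))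
            * pm (x i) * pm (x j) = _
      unfold Gk Lin
      rw [add_mul, add_mul, Finset.sum_mul, Finset.sum_mul]
    calc (∑ x : Fin n → Bool, f (fun a => pm (x a)) * pm (x i) * pm (x j))
        = ∑ x : Fin n → Bool,
            ((∑ k, Gk (fun i' => J i' k) (g k) i j x) + Lin h i j x) :=
          Finset.sum_congr rfl fun x _ => step x
      _ = (∑ x : Fin n → Bool, ∑ k, Gk (fun i' => J i' k) (g k) i j x)
            + ∑ x : Fin n → Bool, Lin h i j x := Finset.sum_add_distrib
      _ = (∑ k, ∑ x : Fin n → Bool, Gk (fun i' => J i' k) (g k) i j x) + 0 := by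
          rw [Finset.sum_comm, sum_lin_zero i j hij h]
      _ = _ := add_zero _
  have hpow : (0:ℝ) < ((2 : ℝ) ^ n)⁻¹ := by positivity
  constructor
  · have : 0 ≤ ∑ k, ∑ x : Fin n → Bool, Gk (fun i' => J i' k) (g k) i j x :=
      Finset.sum_nonneg fun k _ =>
        sum_Gk_nonneg i j hij (fun i' => J i' k) (g k) (hJ i k) (hJ j k)
    show 0 ≤ ((2 : ℝ) ^ n)⁻¹ * _
    rw [hsum]
    exact mul_nonneg hpow.le this
  · rintro ⟨k0, hk1, hk2⟩
    have : 0 < ∑ k, ∑ x : Fin n → Bool, Gk (fun i' => J i' k) (g k) i j x := by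
      apply Finset.sum_pos'
      · exact fun k _ =>
          sum_Gk_nonneg i j hij (fun i' => J i' k) (g k) (hJ i k) (hJ j k)
      · exact ⟨k0, Finset.mem_univ _,
          sum_Gk_pos i j hij (fun i' => J i' k0) (g k0) hk1 hk2⟩
    show 0 < ((2 : ℝ) ^ n)⁻¹ * _
    rw [hsum]
    exact mul_pos hpow this
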